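/- Let X₁, X₂, … be i.i.d. real-valued random variables with ψ(k) = sup_{t∈[0,1]} |P({S_k} ≤ t) − t| → 0 as k → ∞, where S_k = X₁+⋯+X_k. Then the characteristic function φ(x) = E exp(ixX₁) satisfies |φ(2πh)| < 1 for every nonzero integer h. -/

import Mathlib

open MeasureTheory ProbabilityTheory Filter

lemma unit_re_one {z : ℂ} (h1 : ‖z‖ = 1) (h2 : z.re = 1) : z = 1 := by
  have hsq : z.re ^ 2 + z.im ^ 2 = 1 := by
    have := Complex.sq_norm z
    rw [h1] at this
    simpa [Complex.normSq_apply, sq] using this.symm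
  have him : z.im = 0 := by nlinarith
  exact Complex.ext (by simpa using h2) (by simpa using him)

/-- Equality case: an everywhere-unimodular function with `‖∫ f‖ ≥ 1` is a.e. constant. -/
lemma ae_const_of_norm_integral_ge {Ω : Type*} [MeasurableSpace Ω] (P : Measure Ω)
    [IsProbabilityMeasure P] (f : Ω → ℂ) (hm : Measurable f)
    (habs : ∀ ω, ‖f ω‖ = 1) (hge : 1 ≤ ‖∫ ω, f ω ∂P‖) :
    ∃ c : ℂ, ‖c‖ = 1 ∧ ∀ᵐ ω ∂P, f ω = c := by
  have hint : Integrable f P := by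
    refine (integrable_const (1 : ℝ)).mono' hm.aestronglyMeasurable ?_
    exact Eventually.of_forall fun ω => by simp [habs ω]
  set z := ∫ ω, f ω ∂P with hz
  have hzabs : (1:ℝ) ≤ ‖z‖ := hge
  have hz0 : ‖z‖ ≠ 0 := by positivity
  set c : ℂ := z / (‖z‖ : ℂ) with hc
  have hcabs : ‖c‖ = 1 := by
    rw [hc, norm_div]
    simp [hz0]
  refine ⟨c, hcabs, ?_⟩
  set g : Ω → ℝ := fun ω => 1 - ((starRingEnd ℂ) c * f ω).re with hg
  have habs' : ∀ ω, ‖(starRingEnd ℂ) c * f ω‖ = 1 := by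
    intro ω; rw [norm_mul]; simp [hcabs, habs ω]
  have hgnonneg : 0 ≤ g := by
    intro ω
    have := Complex.re_le_norm ((starRingEnd ℂ) c * f ω)
    rw [habs' ω] at this
    show (0:ℝ) ≤ 1 - ((starRingEnd ℂ) c * f ω).re
    linarith
  have hgm : Measurable g := by
    apply measurable_const.sub
    exact (Complex.measurable_re.comp (measurable_const.mul hm))
  have hintcf : Integrable (fun ω => (starRingEnd ℂ) c * f ω) P := hint.const_mul _
  have hginteg : Integrable g P := by
    apply (integrable_const (1:ℝ)).sub
    have : Integrable (fun ω => ((starRingEnd ℂ) c * f ω).re) P := by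
      have := hintcf.re
      simpa using this
    exact this
  have hre : ∫ ω, ((starRingEnd ℂ) c * f ω).re ∂P = ((starRingEnd ℂ) c * z).re := by
    have h1 : ∫ ω, (starRingEnd ℂ) c * f ω ∂P = (starRingEnd ℂ) c * z := by
      rw [integral_const_mul]
    rw [← h1]
    simpa using integral_re hintcf
  have hkey : ((starRingEnd ℂ) c * z).re = ‖z‖ := by
    rw [hc]
    rw [map_div₀]
    have : (starRingEnd ℂ) ((‖z‖ : ℝ) : ℂ) = ((‖z‖ : ℝ) : ℂ) := by
      simp
    rw [this, div_mul_eq_mul_div]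
    have h2 : (starRingEnd ℂ) z * z = ((Complex.normSq z : ℝ) : ℂ) := by
      rw [mul_comm, Complex.mul_conj]
    rw [h2, ← Complex.ofReal_div, Complex.ofReal_re, ← Complex.sq_norm, sq,
      mul_div_assoc, div_self hz0, mul_one]
  have hintval : ∫ ω, g ω ∂P = 1 - ‖z‖ := by
    rw [hg]
    rw [integral_sub (integrable_const 1) (by simpa using hintcf.re)]
    rw [integral_const, hre, hkey]
    simp
  have hgzero : g =ᶠ[ae P] 0 := by
    rw [← integral_eq_zero_iff_of_nonneg hgnonneg hginteg]
    have h1 : ∫ ω, g ω ∂P ≤ 0 := by rw [hintval]; linarith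
    have h2 : 0 ≤ ∫ ω, g ω ∂P := integral_nonneg hgnonneg
    linarith
  filter_upwards [hgzero] with ω hω
  have hre1 : ((starRingEnd ℂ) c * f ω).re = 1 := by
    have : g ω = 0 := hω
    rw [hg] at this
    simp only at this
    linarith
  have hone : (starRingEnd ℂ) c * f ω = 1 := unit_re_one (habs' ω) hre1
  have hcc : c * (starRingEnd ℂ) c = 1 := by
    rw [Complex.mul_conj]
    rw [← Complex.sq_norm, hcabs]
    norm_num
  calc f ω = (c * (starRingEnd ℂ) c) * f ω := by rw [hcc, one_mul]
    _ = c * ((starRingEnd ℂ) c * f ω) := by ring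
    _ = c := by rw [hone, mul_one]

lemma exp_int_lattice (h m : ℤ) :
    Complex.exp (((2 * Real.pi * (h:ℝ) : ℝ) : ℂ) * ((m:ℝ) : ℂ) * Complex.I) = 1 := by
  have : (((2 * Real.pi * (h:ℝ)) : ℝ) : ℂ) * ((m:ℝ) : ℂ) * Complex.I
      = ((h * m : ℤ) : ℂ) * (2 * (Real.pi : ℂ) * Complex.I) := by push_cast; ring
  rw [this, Complex.exp_int_mul_two_pi_mul_I]

/-- If the fractional parts of the partial sums `S_k` of i.i.d. real
random variables converge to uniform in the Kolmogorov metric (`ψ(k) → 0`), then the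
characteristic function `φ(x) = E exp(ixX₁)` satisfies `|φ(2πh)| < 1` for all nonzero
integers `h`. -/
theorem stmt8
    {Ω : Type*} [MeasurableSpace Ω] (P : Measure Ω) [IsProbabilityMeasure P]
    (X : ℕ → Ω → ℝ) (hXm : ∀ i, Measurable (X i))
    (hindep : iIndepFun X P)
    (hident : ∀ i, Measure.map (X i) P = Measure.map (X 0) P)
    (S : ℕ → Ω → ℝ) (hS : ∀ k ω, S k ω = ∑ j ∈ Finset.range k, X j ω)
    (ψ : ℕ → ℝ)
    (hψ : ∀ k, ψ k = ⨆ t : Set.Icc (0:ℝ) 1,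
        |(P {ω | Int.fract (S k ω) ≤ (t : ℝ)}).toReal - (t : ℝ)|)
    (hψ0 : Tendsto ψ atTop (nhds 0))
    (φ : ℝ → ℂ) (hφ : ∀ x, φ x = ∫ ω, Complex.exp (x * X 0 ω * Complex.I) ∂P) :
    ∀ h : ℤ, h ≠ 0 → ‖φ (2 * Real.pi * h)‖ < 1 := by
  intro h hh
  by_contra hcon
  push_neg at hcon
  set x : ℝ := 2 * Real.pi * h with hx
  set f : Ω → ℂ := fun ω => Complex.exp (x * X 0 ω * Complex.I) with hf
  have habs1 : ∀ ω, ‖f ω‖ = 1 := by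
    intro ω
    show ‖Complex.exp ((x:ℂ) * ((X 0 ω : ℝ) : ℂ) * Complex.I)‖ = 1
    rw [show ((x:ℂ) * ((X 0 ω : ℝ) : ℂ) * Complex.I) = ((x * X 0 ω : ℝ) : ℂ) * Complex.I by push_cast; ring]
    rw [Complex.norm_exp]
    simp
  have hexpm : ∀ i, Measurable (fun ω => Complex.exp (x * X i ω * Complex.I)) := by
    intro i
    exact (Complex.continuous_exp.comp
      (((continuous_const.mul Complex.continuous_ofReal).mul continuous_const))).measurable.comp (hXm i)
  have hfm : Measurable f := hexpm 0
  obtain ⟨c, hcabs, hfc⟩ := ae_const_of_norm_integral_ge P f hfm habs1 (by rw [← hφ x]; exact hcon)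
  -- transfer to every X i
  set B : Set ℝ := {r | Complex.exp ((x:ℂ) * (r:ℂ) * Complex.I) = c} with hB
  have hBm : MeasurableSet B := by
    have : Continuous fun r : ℝ => Complex.exp ((x:ℂ) * (r:ℂ) * Complex.I) :=
      Complex.continuous_exp.comp ((continuous_const.mul Complex.continuous_ofReal).mul continuous_const)
    exact this.measurable (measurableSet_singleton c)
  have haeB : ∀ i, ∀ᵐ ω ∂P, X i ω ∈ B := by
    intro i
    have h0 : ∀ᵐ ω ∂P, X 0 ω ∈ B := hfc
    have h0' : ∀ᵐ r ∂(Measure.map (X 0) P), r ∈ B :=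
      (ae_map_iff (hXm 0).aemeasurable hBm).mpr h0
    have hi' : ∀ᵐ r ∂(Measure.map (X i) P), r ∈ B := by rw [hident i]; exact h0'
    exact (ae_map_iff (hXm i).aemeasurable hBm).mp hi'
  have haeAll : ∀ᵐ ω ∂P, ∀ i, X i ω ∈ B := ae_all_iff.mpr haeB
  -- measurability of fract ∘ S k
  have hSm : ∀ k, Measurable (S k) := by
    intro k
    have : S k = fun ω => ∑ j ∈ Finset.range k, X j ω := by funext ω; exact hS k ω
    rw [this]
    exact Finset.measurable_sum _ (fun j _ => hXm j)
  have hfrm : ∀ k, Measurable (fun ω => Int.fract (S k ω)) := fun k =>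
    measurable_fract.comp (hSm k)
  -- the uniform lower bound on ψ
  set N : ℝ := (h.natAbs : ℝ) with hN
  have hN1 : (1:ℝ) ≤ N := by
    have : 1 ≤ h.natAbs := Int.natAbs_pos.mpr hh
    rw [hN]
    exact_mod_cast this
  have hψlb : ∀ k, 1 / (8 * N) ≤ ψ k := by
    intro k
    -- a.e. the fractional part sits in a fixed finite set
    have haeT : ∀ᵐ ω ∂P, Complex.exp ((x:ℂ) * ((Int.fract (S k ω) : ℝ) : ℂ) * Complex.I) = c ^ k := by
      filter_upwards [haeAll] with ω hω
      have hSexp : Complex.exp ((x:ℂ) * ((S k ω : ℝ) : ℂ) * Complex.I) = c ^ k := by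
        rw [hS k ω]
        clear hS
        induction k with
        | zero => simp
        | succ n ih =>
          rw [Finset.sum_range_succ, pow_succ]
          rw [show ((x:ℂ) * (((∑ j ∈ Finset.range n, X j ω) + X n ω : ℝ) : ℂ) * Complex.I)
              = (x:ℂ) * ((∑ j ∈ Finset.range n, X j ω : ℝ) : ℂ) * Complex.I
                + (x:ℂ) * ((X n ω : ℝ) : ℂ) * Complex.I by push_cast; ring]
          rw [Complex.exp_add, ih, hω n]
      have hfl : Complex.exp ((x:ℂ) * ((⌊S k ω⌋ : ℝ) : ℂ) * Complex.I) = 1 := by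
        rw [hx]
        exact exp_int_lattice h ⌊S k ω⌋
      have harg : (x:ℂ) * ((Int.fract (S k ω) : ℝ) : ℂ) * Complex.I
          = (x:ℂ) * ((S k ω : ℝ) : ℂ) * Complex.I - (x:ℂ) * ((⌊S k ω⌋ : ℝ) : ℂ) * Complex.I := by
        rw [show Int.fract (S k ω) = S k ω - (⌊S k ω⌋ : ℝ) from rfl]; push_cast; ring
      rw [harg, Complex.exp_sub, hSexp, hfl, div_one]
    -- pick a witness value t₁
    obtain ⟨ω₀, hω₀⟩ := haeT.exists
    set t₁ : ℝ := Int.fract (S k ω₀) with ht₁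
    have ht₁0 : 0 ≤ t₁ := Int.fract_nonneg _
    have ht₁1 : t₁ < 1 := Int.fract_lt_one _
    set T : Finset ℝ := (Finset.Ioo (-(h.natAbs : ℤ)) (h.natAbs : ℤ)).image
      (fun m : ℤ => t₁ + (m : ℝ) / (h : ℝ)) with hT
    have hπpos : (0:ℝ) < 2 * Real.pi := by positivity
    have hhR : ((h:ℝ)) ≠ 0 := Int.cast_ne_zero.mpr hh
    have hsub : ∀ t : ℝ, 0 ≤ t → t < 1 →
        Complex.exp ((x:ℂ) * (t:ℂ) * Complex.I) = c ^ k → t ∈ T := by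
      intro t ht0 ht1 hexp
      have hexp' : Complex.exp ((x:ℂ) * (t:ℂ) * Complex.I)
          = Complex.exp ((x:ℂ) * (t₁:ℂ) * Complex.I) := by rw [hexp, hω₀]
      obtain ⟨n, hn⟩ := Complex.exp_eq_exp_iff_exists_int.mp hexp'
      have hnre : x * t = x * t₁ + n * (2 * Real.pi) := by
        have := congrArg Complex.im hn
        simpa using this
      have hht : (h:ℝ) * t = (h:ℝ) * t₁ + n := by
        have h2π : (2 * Real.pi) ≠ 0 := by positivity
        apply mul_left_cancel₀ h2π
        rw [hx] at hnre
        ring_nf at hnre ⊢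
        linarith
      have htval : t = t₁ + (n:ℝ) / (h:ℝ) := by
        field_simp
        nlinarith [hht]
      have hnbd : -((h.natAbs : ℤ)) < n ∧ n < (h.natAbs : ℤ) := by
        have habsr : ((h.natAbs : ℤ) : ℝ) = |(h:ℝ)| := by
          push_cast [Nat.cast_natAbs]
          simp
        have h1 : (n:ℝ) = (h:ℝ) * (t - t₁) := by nlinarith [hht]
        have h2 : |(n:ℝ)| < |(h:ℝ)| := by
          rw [h1, abs_mul]
          have : |t - t₁| < 1 := by rw [abs_lt]; constructor <;> nlinarith
          have hpos : 0 < |(h:ℝ)| := abs_pos.mpr hhR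
          nlinarith [abs_nonneg (t - t₁)]
        constructor
        · exact_mod_cast (abs_lt.mp (by rw [← habsr] at h2; exact_mod_cast h2)).1
        · exact_mod_cast (abs_lt.mp (by rw [← habsr] at h2; exact_mod_cast h2)).2
      rw [hT]
      exact Finset.mem_image.mpr ⟨n, Finset.mem_Ioo.mpr hnbd, htval.symm⟩
    have ht₁T : t₁ ∈ T := hsub t₁ ht₁0 ht₁1 hω₀
    -- the event lands in T a.e.
    have haeT' : ∀ᵐ ω ∂P, Int.fract (S k ω) ∈ (T : Set ℝ) := by
      filter_upwards [haeT] with ω hω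
      exact hsub _ (Int.fract_nonneg _) (Int.fract_lt_one _) hω
    -- cardinality bound
    have hcard_pos : 0 < T.card := Finset.card_pos.mpr ⟨t₁, ht₁T⟩
    have hcardle : (T.card : ℝ) ≤ 2 * N := by
      have h1 : T.card ≤ (Finset.Ioo (-(h.natAbs : ℤ)) (h.natAbs : ℤ)).card :=
        Finset.card_image_le
      rw [Int.card_Ioo] at h1
      have h3 : T.card ≤ 2 * h.natAbs := by omega
      rw [hN]
      exact_mod_cast h3
    -- full measure event
    set E : Set Ω := (fun ω => Int.fract (S k ω)) ⁻¹' (T : Set ℝ) with hE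
    have hEm : MeasurableSet E := (hfrm k) (T.finite_toSet.measurableSet)
    have hE1 : P E = 1 := by
      rw [← prob_compl_eq_zero_iff hEm]
      exact MeasureTheory.ae_iff.mp haeT'
    set v : ℝ → ℝ := fun t => (P {ω | Int.fract (S k ω) = t}).toReal with hv
    have hsingm : ∀ t : ℝ, MeasurableSet {ω | Int.fract (S k ω) = t} := fun t =>
      (hfrm k) (measurableSet_singleton t)
    have hsum : 1 ≤ ∑ t ∈ T, v t := by
      have hEsub : E ⊆ ⋃ t ∈ T, {ω | Int.fract (S k ω) = t} := by
        intro ω hω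
        simp only [Set.mem_iUnion]
        exact ⟨_, hω, rfl⟩
      have h1 : (1:ENNReal) ≤ ∑ t ∈ T, P {ω | Int.fract (S k ω) = t} := by
        calc (1:ENNReal) = P E := hE1.symm
          _ ≤ P (⋃ t ∈ T, {ω | Int.fract (S k ω) = t}) := measure_mono hEsub
          _ ≤ ∑ t ∈ T, P {ω | Int.fract (S k ω) = t} := measure_biUnion_finset_le T _
      have hfin : ∀ t ∈ T, P {ω | Int.fract (S k ω) = t} ≠ ⊤ := fun t _ => measure_ne_top P _
      have hne : (∑ t ∈ T, P {ω | Int.fract (S k ω) = t}) ≠ ⊤ := by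
        rw [ENNReal.sum_ne_top]
        exact hfin
      have h2 := ENNReal.toReal_mono hne h1
      rwa [ENNReal.toReal_one, ENNReal.toReal_sum hfin] at h2
    -- pigeonhole
    obtain ⟨t₀, ht₀T, ht₀⟩ : ∃ t ∈ T, 1 / (T.card : ℝ) ≤ v t := by
      by_contra hno
      push_neg at hno
      have hlt : ∑ t ∈ T, v t < ∑ t ∈ T, 1 / (T.card : ℝ) :=
        Finset.sum_lt_sum_of_nonempty ⟨t₁, ht₁T⟩ hno
      rw [Finset.sum_const, nsmul_eq_mul, mul_one_div,
        div_self (Nat.cast_pos.mpr hcard_pos).ne'] at hlt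
      linarith
    set p : ℝ := v t₀ with hpdef
    have hcardR : (0:ℝ) < T.card := Nat.cast_pos.mpr hcard_pos
    have hp : 1 / (2 * N) ≤ p := by
      refine le_trans (one_div_le_one_div_of_le hcardR hcardle) ht₀
    have hp_pos : 0 < p := lt_of_lt_of_le (by positivity) hp
    have ht₀mem : 0 ≤ t₀ ∧ t₀ < 1 := by
      have hne2 : {ω | Int.fract (S k ω) = t₀}.Nonempty := by
        by_contra hemp
        rw [Set.not_nonempty_iff_eq_empty] at hemp
        have : p = 0 := by
          rw [hpdef, hv]
          simp only [hemp]
          simp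
        linarith
      obtain ⟨ω', hω'⟩ := hne2
      have hω'' : Int.fract (S k ω') = t₀ := hω'
      exact ⟨hω'' ▸ Int.fract_nonneg _, hω'' ▸ Int.fract_lt_one _⟩
    -- the cdf
    set F : ℝ → ℝ := fun t => (P {ω | Int.fract (S k ω) ≤ t}).toReal with hF
    have hF01 : ∀ t, 0 ≤ F t ∧ F t ≤ 1 := by
      intro t
      refine ⟨ENNReal.toReal_nonneg, ?_⟩
      have h1 : P {ω | Int.fract (S k ω) ≤ t} ≤ 1 := prob_le_one
      have := ENNReal.toReal_mono (by simp) h1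
      simpa using this
    have hmono : ∀ s, 0 ≤ s → s < t₀ → F s + p ≤ F t₀ := by
      intro s _ hst
      have hdisj : Disjoint {ω | Int.fract (S k ω) ≤ s} {ω | Int.fract (S k ω) = t₀} := by
        rw [Set.disjoint_left]
        intro ω h1 h2
        simp only [Set.mem_setOf_eq] at h1 h2
        rw [h2] at h1; linarith
      have hsub2 : {ω | Int.fract (S k ω) ≤ s} ∪ {ω | Int.fract (S k ω) = t₀}
          ⊆ {ω | Int.fract (S k ω) ≤ t₀} := by
        intro ω hω
        rcases hω with h1 | h1 <;> simp only [Set.mem_setOf_eq] at h1 ⊢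
        · linarith
        · exact le_of_eq h1
      have h1 : P {ω | Int.fract (S k ω) ≤ s} + P {ω | Int.fract (S k ω) = t₀}
          ≤ P {ω | Int.fract (S k ω) ≤ t₀} := by
        rw [← measure_union hdisj (hsingm t₀)]
        exact measure_mono hsub2
      have h2 := ENNReal.toReal_mono (measure_ne_top P _) h1
      rwa [ENNReal.toReal_add (measure_ne_top P _) (measure_ne_top P _)] at h2
    have hψle : ∀ t : ℝ, 0 ≤ t → t ≤ 1 → |F t - t| ≤ ψ k := by
      intro t h0 h1
      rw [hψ k]
      have hbdd : BddAbove (Set.range fun u : Set.Icc (0:ℝ) 1 =>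
          |(P {ω | Int.fract (S k ω) ≤ (u:ℝ)}).toReal - (u:ℝ)|) := by
        refine ⟨2, ?_⟩
        rintro y ⟨u, rfl⟩
        have hu1 : (0:ℝ) ≤ u := u.2.1
        have hu2 : (u:ℝ) ≤ 1 := u.2.2
        have hFu := hF01 u
        rw [abs_le]
        constructor
        · simp only [hF] at hFu; linarith [hFu.1, hFu.2]
        · simp only [hF] at hFu; linarith [hFu.1, hFu.2]
      exact le_ciSup hbdd ⟨t, h0, h1⟩
    have hFt₀ : p ≤ F t₀ := by
      have hsub3 : {ω | Int.fract (S k ω) = t₀} ⊆ {ω | Int.fract (S k ω) ≤ t₀} :=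
        fun ω hω => le_of_eq hω
      exact ENNReal.toReal_mono (measure_ne_top P _) (measure_mono hsub3)
    have h8 : 1 / (8 * N) ≤ p / 4 := by
      have : 1 / (8 * N) = (1 / (2 * N)) / 4 := by ring
      rw [this]
      linarith
    rcases le_or_gt t₀ (p/2) with hcase | hcase
    · have h1 : p/2 ≤ |F t₀ - t₀| := by
        calc p/2 = p - p/2 := by ring
          _ ≤ F t₀ - t₀ := by linarith
          _ ≤ |F t₀ - t₀| := le_abs_self _
      have h2 := hψle t₀ ht₀mem.1 ht₀mem.2.le
      linarith
    · have hs0 : 0 ≤ t₀ - p/2 := by linarith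
      have hst : t₀ - p/2 < t₀ := by linarith
      have hkey := hmono (t₀ - p/2) hs0 hst
      have h2 := hψle t₀ ht₀mem.1 ht₀mem.2.le
      have h3 := hψle (t₀ - p/2) hs0 (by linarith [ht₀mem.2])
      have h4 : p/2 ≤ |F t₀ - t₀| + |F (t₀ - p/2) - (t₀ - p/2)| := by
        have e1 := le_abs_self (F t₀ - t₀)
        have e2 := neg_abs_le (F (t₀ - p/2) - (t₀ - p/2))
        linarith
      linarith
  have hle : 1 / (8 * N) ≤ 0 := ge_of_tendsto hψ0 (Eventually.of_forall hψlb)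
  have : (0:ℝ) < 1 / (8 * N) := by positivity
  linarith
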